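/- Let p ≥ 3 be an odd integer. The Hilbert ideal I_H is generated by invariants of positive degree at most p; that is, I_H equals the ideal of R generated by the homogeneous G-invariant polynomials f with 0 < deg f ≤ p. -/

import Mathlib

open MvPolynomial

noncomputable section

abbrev DVar (r s : ℕ) := (Fin r ⊕ Fin r) ⊕ (Fin s ⊕ Fin s)

def dswap {r s : ℕ} : DVar r s → DVar r s
  | .inl (.inl i) => .inl (.inr i)
  | .inl (.inr i) => .inl (.inl i)
  | .inr (.inl j) => .inr (.inr j)
  | .inr (.inr j) => .inr (.inl j)

def sigmaMap (F : Type*) [Field F] (r s : ℕ) :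
    MvPolynomial (DVar r s) F →ₐ[F] MvPolynomial (DVar r s) F :=
  MvPolynomial.rename dswap

def rhoCoeff {F : Type*} [Field F] {r s : ℕ} (lam : Fin r → F) : DVar r s → F
  | .inl (.inl i) => lam i
  | .inl (.inr i) => (lam i)⁻¹
  | .inr _ => 1

def rhoMap (F : Type*) [Field F] (r s : ℕ) (lam : Fin r → F) :
    MvPolynomial (DVar r s) F →ₐ[F] MvPolynomial (DVar r s) F :=
  MvPolynomial.aeval fun v => MvPolynomial.C (rhoCoeff lam v) * MvPolynomial.X v

def HilbertIdeal (F : Type*) [Field F] (r s : ℕ) (lam : Fin r → F) :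
    Ideal (MvPolynomial (DVar r s) F) :=
  Ideal.span {f | sigmaMap F r s f = f ∧ rhoMap F r s lam f = f ∧ constantCoeff f = 0}

def IsMonomial {σ F : Type*} [CommSemiring F] (f : MvPolynomial σ F) : Prop :=
  ∃ d : σ →₀ ℕ, f = monomial d 1

def GSet (F : Type*) [Field F] (r s p : ℕ) (lam : Fin r → F) :
    Set (MvPolynomial (DVar r s) F) :=
  {f | ∃ m, IsMonomial m ∧ rhoMap F r s lam m = m ∧ sigmaMap F r s m ≠ m ∧
      m.totalDegree ≤ p ∧ f = m + sigmaMap F r s m} ∪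
  {f | ∃ (m : MvPolynomial (DVar r s) F) (v : DVar r s), IsMonomial m ∧ rhoMap F r s lam m = m ∧ m.totalDegree ≤ p ∧
      X v ∣ m ∧ f = X v * m} ∪
  {f | (∃ i : Fin r, f = X (Sum.inl (Sum.inl i)) * X (Sum.inl (Sum.inr i))) ∨
       (∃ j : Fin s, f = X (Sum.inr (Sum.inl j)) * X (Sum.inr (Sum.inr j)))}

def lmExp {σ F : Type*} [CommSemiring F] (mo : MonomialOrder σ) (f : MvPolynomial σ F) :
    σ →₀ ℕ :=
  mo.toSyn.symm (f.support.sup fun d => mo.toSyn d)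

namespace HilbAux

variable {F : Type*} [Field F] {r s : ℕ}

lemma dswap_dswap (v : DVar r s) : dswap (dswap v) = v := by
  rcases v with (i | i) | (j | j) <;> rfl

lemma dswap_injective : Function.Injective (dswap : DVar r s → DVar r s) :=
  Function.Involutive.injective dswap_dswap

lemma dswap_ne (v : DVar r s) : dswap v ≠ v := by
  rcases v with (i | i) | (j | j) <;> simp [dswap]

def dmap {r s : ℕ} (d : DVar r s →₀ ℕ) : DVar r s →₀ ℕ := Finsupp.mapDomain dswap d

lemma dmap_apply (d : DVar r s →₀ ℕ) (v : DVar r s) : dmap d v = d (dswap v) := by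
  conv_lhs => rw [← dswap_dswap v]
  exact Finsupp.mapDomain_apply dswap_injective d (dswap v)

lemma dmap_dmap (d : DVar r s →₀ ℕ) : dmap (dmap d) = d := by
  ext v; rw [dmap_apply, dmap_apply, dswap_dswap]

lemma dmap_add (a b : DVar r s →₀ ℕ) : dmap (a + b) = dmap a + dmap b :=
  Finsupp.mapDomain_add

lemma dmap_single (v : DVar r s) (k : ℕ) :
    dmap (Finsupp.single v k) = Finsupp.single (dswap v) k :=
  Finsupp.mapDomain_single

lemma degree_eq_sum (d : DVar r s →₀ ℕ) : d.degree = d.sum fun _ n => n := rfl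

lemma degree_add (a b : DVar r s →₀ ℕ) : (a + b).degree = a.degree + b.degree := by
  rw [degree_eq_sum, degree_eq_sum, degree_eq_sum]
  exact Finsupp.sum_add_index' (fun _ => rfl) (fun _ _ _ => rfl)

lemma degree_dmap (d : DVar r s →₀ ℕ) : (dmap d).degree = d.degree := by
  rw [degree_eq_sum, degree_eq_sum, dmap]
  exact Finsupp.sum_mapDomain_index_inj dswap_injective

lemma degree_toFinsupp (m : Multiset (DVar r s)) :
    (Multiset.toFinsupp m).degree = Multiset.card m :=
  Multiset.toFinsupp_sum_eq m

def chi (lam : Fin r → F) (d : DVar r s →₀ ℕ) : F :=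
  d.prod fun v k => rhoCoeff lam v ^ k

variable (lam : Fin r → F)

lemma chi_zero : chi (s := s) lam 0 = 1 := Finsupp.prod_zero_index

lemma chi_add (a b : DVar r s →₀ ℕ) : chi lam (a + b) = chi lam a * chi lam b :=
  Finsupp.prod_add_index' (fun v => pow_zero _) (fun v k1 k2 => pow_add _ _ _)

lemma chi_single (v : DVar r s) (k : ℕ) :
    chi lam (Finsupp.single v k) = rhoCoeff lam v ^ k :=
  Finsupp.prod_single_index (pow_zero _)

lemma rhoCoeff_mul_swap (hlam0 : ∀ i, lam i ≠ 0) (v : DVar r s) :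
    rhoCoeff lam v * rhoCoeff lam (dswap v) = 1 := by
  rcases v with (i | i) | (j | j)
  · exact mul_inv_cancel₀ (hlam0 i)
  · exact inv_mul_cancel₀ (hlam0 i)
  · exact one_mul 1
  · exact one_mul 1

lemma rhoCoeff_ne_zero (hlam0 : ∀ i, lam i ≠ 0) (v : DVar r s) :
    rhoCoeff lam v ≠ 0 := by
  rcases v with (i | i) | (j | j)
  · exact hlam0 i
  · exact inv_ne_zero (hlam0 i)
  · exact one_ne_zero
  · exact one_ne_zero

lemma chi_dmap_mul (hlam0 : ∀ i, lam i ≠ 0) (d : DVar r s →₀ ℕ) :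
    chi lam (dmap d) * chi lam d = 1 := by
  rw [chi, dmap, Finsupp.prod_mapDomain_index_inj dswap_injective, chi, ← Finsupp.prod_mul]
  rw [Finsupp.prod_congr (g2 := fun _ _ => 1)]
  · exact Finset.prod_const_one
  · intro v _
    rw [← mul_pow, mul_comm, rhoCoeff_mul_swap lam hlam0, one_pow]

lemma chi_dmap (hlam0 : ∀ i, lam i ≠ 0) {d : DVar r s →₀ ℕ} (h : chi lam d = 1) :
    chi lam (dmap d) = 1 := by
  have := chi_dmap_mul lam hlam0 d
  rwa [h, mul_one] at this

lemma sigma_monomial (d : DVar r s →₀ ℕ) (c : F) :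
    sigmaMap F r s (monomial d c) = monomial (dmap d) c :=
  rename_monomial _ _ _

lemma sigma_sigma (f : MvPolynomial (DVar r s) F) :
    sigmaMap F r s (sigmaMap F r s f) = f := by
  show rename dswap (rename dswap f) = f
  rw [rename_rename, show (dswap ∘ dswap : DVar r s → DVar r s) = id from funext dswap_dswap,
    rename_id, AlgHom.id_apply]

lemma rho_monomial (d : DVar r s →₀ ℕ) (c : F) :
    rhoMap F r s lam (monomial d c) = monomial d (chi lam d * c) := by
  rw [rhoMap, aeval_monomial, monomial_eq]
  simp_rw [mul_pow, ← C_pow]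
  rw [Finsupp.prod_mul, ← map_finsuppProd (C : F →+* MvPolynomial (DVar r s) F)]
  rw [show (algebraMap F (MvPolynomial (DVar r s) F)) c = C c from rfl]
  rw [← chi, map_mul]
  ring

lemma coeff_rho (f : MvPolynomial (DVar r s) F) (d : DVar r s →₀ ℕ) :
    coeff d (rhoMap F r s lam f) = chi lam d * coeff d f := by
  classical
  conv_lhs => rw [f.as_sum, map_sum]
  rw [coeff_sum]
  simp_rw [rho_monomial, coeff_monomial]
  rw [Finset.sum_ite_eq' f.support d fun v => chi lam v * coeff v f]
  split_ifs with h
  · rfl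
  · rw [notMem_support_iff.mp h, mul_zero]

lemma coeff_sigma (f : MvPolynomial (DVar r s) F) (d : DVar r s →₀ ℕ) :
    coeff (dmap d) (sigmaMap F r s f) = coeff d f :=
  coeff_rename_mapDomain dswap dswap_injective f d


def Jset (F : Type*) [Field F] (r s p : ℕ) (lam : Fin r → F) :
    Set (MvPolynomial (DVar r s) F) :=
  {f : MvPolynomial (DVar r s) F |
    sigmaMap F r s f = f ∧ rhoMap F r s lam f = f ∧
    ∃ d : ℕ, 0 < d ∧ d ≤ p ∧ f.IsHomogeneous d}

variable {p : ℕ}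

lemma monomial_fixed_mem (hp : 3 ≤ p) (hlam0 : ∀ i, lam i ≠ 0)
    (d : DVar r s →₀ ℕ) (hd0 : d ≠ 0) (hfix : dmap d = d) :
    (monomial d 1 : MvPolynomial (DVar r s) F) ∈ Ideal.span (Jset F r s p lam) := by
  obtain ⟨v, hv⟩ : ∃ v, d v ≠ 0 := by
    by_contra h; push_neg at h; exact hd0 (Finsupp.ext fun v => h v)
  set e : DVar r s →₀ ℕ := Finsupp.single v 1 + Finsupp.single (dswap v) 1 with he
  have hdv' : d (dswap v) = d v := by
    conv_lhs => rw [← dmap_apply, hfix]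
  have hed : e ≤ d := by
    rw [Finsupp.le_def]
    intro u
    rw [he, Finsupp.add_apply, Finsupp.single_apply, Finsupp.single_apply]
    by_cases h1 : v = u
    · subst h1
      rw [if_pos rfl, if_neg (dswap_ne v)]
      omega
    · rw [if_neg h1]
      by_cases h2 : dswap v = u
      · subst h2
        rw [if_pos rfl, hdv']
        omega
      · rw [if_neg h2]; omega
  have hdege : e.degree = 2 := by
    rw [he, degree_add, degree_eq_sum, degree_eq_sum, Finsupp.sum_single_index rfl,
      Finsupp.sum_single_index rfl]
  have hgen : (monomial e 1 : MvPolynomial (DVar r s) F) ∈ Jset F r s p lam := by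
    refine ⟨?_, ?_, 2, by norm_num, by omega, ?_⟩
    · rw [sigma_monomial]
      congr 1
      rw [he, dmap_add, dmap_single, dmap_single, dswap_dswap, add_comm]
    · rw [rho_monomial, he, chi_add, chi_single, chi_single, pow_one, pow_one,
        rhoCoeff_mul_swap lam hlam0, one_mul]
    · exact isHomogeneous_monomial 1 hdege
  have heq : (monomial d 1 : MvPolynomial (DVar r s) F)
      = monomial e 1 * monomial (d - e) 1 := by
    rw [monomial_mul, one_mul, add_tsub_cancel_of_le hed]
  rw [heq]
  exact Ideal.mul_mem_right _ _ (Ideal.subset_span hgen)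

lemma pair_gen_mem (hlam0 : ∀ i, lam i ≠ 0)
    (d : DVar r s →₀ ℕ) (hd0 : d ≠ 0) (hdeg : d.degree ≤ p) (hchi : chi lam d = 1) :
    (monomial d 1 + monomial (dmap d) 1 : MvPolynomial (DVar r s) F) ∈ Jset F r s p lam := by
  have hchi' : chi lam (dmap d) = 1 := chi_dmap lam hlam0 hchi
  refine ⟨?_, ?_, d.degree, ?_, hdeg, ?_⟩
  · rw [map_add, sigma_monomial, sigma_monomial, dmap_dmap, add_comm]
  · rw [map_add, rho_monomial, rho_monomial, hchi, hchi', one_mul]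
  · exact Nat.pos_of_ne_zero fun h => hd0 ((Finsupp.degree_eq_zero_iff d).mp h)
  · exact (isHomogeneous_monomial 1 rfl).add (isHomogeneous_monomial 1 (degree_dmap d))

lemma list_prod_pow (hwp : ∀ v : DVar r s, rhoCoeff lam v ^ p = 1) :
    ∀ L : List (DVar r s), ((L.map (rhoCoeff lam)).prod) ^ p = 1
  | [] => by simp
  | a :: t => by
      rw [List.map_cons, List.prod_cons, mul_pow, hwp, one_mul, list_prod_pow hwp t]

lemma list_prod_ne_zero (hlam0 : ∀ i, lam i ≠ 0) :
    ∀ L : List (DVar r s), ((L.map (rhoCoeff lam)).prod) ≠ 0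
  | [] => by simp
  | a :: t => by
      rw [List.map_cons, List.prod_cons]
      exact mul_ne_zero (rhoCoeff_ne_zero lam hlam0 a) (list_prod_ne_zero hlam0 t)

lemma chi_coe (m : Multiset (DVar r s)) :
    chi lam (Multiset.toFinsupp m) = (m.map (rhoCoeff lam)).prod := by
  induction m using Multiset.induction_on with
  | empty => simp [chi_zero]
  | cons a t ih =>
      rw [← Multiset.singleton_add, map_add, Multiset.toFinsupp_singleton, chi_add,
        chi_single, pow_one, Multiset.map_add, Multiset.prod_add, Multiset.map_singleton,
        Multiset.prod_singleton, ih]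

lemma davenport (hp : 0 < p) (hlam0 : ∀ i, lam i ≠ 0)
    (hwp : ∀ v : DVar r s, rhoCoeff lam v ^ p = 1)
    (d : DVar r s →₀ ℕ) (hbig : p < d.degree) :
    ∃ e : DVar r s →₀ ℕ, e ≤ d ∧ chi lam e = 1 ∧ 0 < e.degree ∧ e.degree ≤ p := by
  classical
  set l : List (DVar r s) := d.toMultiset.toList with hl
  have hdl : Multiset.toFinsupp (↑l : Multiset (DVar r s)) = d := by
    rw [hl, Multiset.coe_toList, Finsupp.toMultiset_toFinsupp]
  have hlen : l.length = d.degree := by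
    rw [← hdl, degree_toFinsupp]
    simp
  have key : ∀ i j : ℕ, i < j → j ≤ p →
      ((l.take i).map (rhoCoeff lam)).prod = ((l.take j).map (rhoCoeff lam)).prod →
      ∃ e : DVar r s →₀ ℕ, e ≤ d ∧ chi lam e = 1 ∧ 0 < e.degree ∧ e.degree ≤ p := by
    intro i j hij hjp hg
    set t : List (DVar r s) := (l.take j).drop i with ht
    have htj : l.take i ++ t = l.take j := by
      conv_rhs => rw [← List.take_append_drop i (l.take j)]
      rw [List.take_take, min_eq_left (le_of_lt hij)]
    have hprod : ((l.take i).map (rhoCoeff lam)).prod * ((t.map (rhoCoeff lam)).prod)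
        = ((l.take j).map (rhoCoeff lam)).prod := by
      rw [← htj, List.map_append, List.prod_append]
    have ht1 : (t.map (rhoCoeff lam)).prod = 1 := by
      apply mul_left_cancel₀ (list_prod_ne_zero lam hlam0 (l.take i))
      rw [hprod, mul_one, hg]
    have hlt : t.length = j - i := by
      rw [ht, List.length_drop, List.length_take, min_eq_left]
      omega
    refine ⟨Multiset.toFinsupp (↑t : Multiset (DVar r s)), ?_, ?_, ?_, ?_⟩
    · rw [← hdl]
      intro v
      simp only [Multiset.toFinsupp_apply]
      apply Multiset.count_le_of_le
      exact Multiset.coe_le.mpr ((List.drop_sublist _ _).trans (List.take_sublist _ _)).subperm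
    · rw [chi_coe]
      exact_mod_cast ht1
    · rw [degree_toFinsupp]
      simp only [Multiset.coe_card]
      omega
    · rw [degree_toFinsupp]
      simp only [Multiset.coe_card]
      omega
  have hgroot : ∀ k ∈ Finset.range (p + 1),
      ((l.take k).map (rhoCoeff lam)).prod ∈ (Polynomial.nthRoots p (1 : F)).toFinset := by
    intro k _
    rw [Multiset.mem_toFinset, Polynomial.mem_nthRoots hp]
    exact list_prod_pow lam hwp _
  have hcard : ((Polynomial.nthRoots p (1 : F)).toFinset.card) < (Finset.range (p + 1)).card := by
    rw [Finset.card_range]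
    exact Nat.lt_succ_of_le (le_trans (Multiset.toFinset_card_le _) (Polynomial.card_nthRoots p 1))
  obtain ⟨i, hi, j, hj, hij, hgij⟩ :=
    Finset.exists_ne_map_eq_of_card_lt_of_maps_to hcard hgroot
  rw [Finset.mem_range] at hi hj
  rcases lt_or_gt_of_ne hij with h | h
  · exact key i j h (by omega) hgij
  · exact key j i h (by omega) hgij.symm


lemma pair_mem [CharP F 2] (hp : 3 ≤ p) (hlam0 : ∀ i, lam i ≠ 0)
    (hwp : ∀ v : DVar r s, rhoCoeff lam v ^ p = 1) :
    ∀ D (d : DVar r s →₀ ℕ), d.degree = D → d ≠ 0 → chi lam d = 1 →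
      (monomial d 1 + monomial (dmap d) 1 : MvPolynomial (DVar r s) F)
        ∈ Ideal.span (Jset F r s p lam) := by
  intro D
  induction D using Nat.strong_induction_on with
  | _ D ih =>
    intro d hD hd0 hchi
    by_cases hfix : dmap d = d
    · rw [hfix, CharTwo.add_self_eq_zero]
      exact zero_mem _
    by_cases hDp : D ≤ p
    · exact Ideal.subset_span (pair_gen_mem lam hlam0 d hd0 (hD ▸ hDp) hchi)
    push_neg at hDp
    obtain ⟨e, hed, hchie, he0, hep⟩ := davenport lam (by omega) hlam0 hwp d (by omega)
    have he0' : e ≠ 0 := by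
      intro h
      rw [h, map_zero] at he0
      omega
    set e2 := d - e with he2
    have hsplit : e + e2 = d := add_tsub_cancel_of_le hed
    have hchie2 : chi lam e2 = 1 := by
      have h := chi_add lam e e2
      rw [hsplit, hchi, hchie, one_mul] at h
      exact h.symm
    have hdeg2 : e2.degree = D - e.degree := by
      have h := degree_add e e2
      rw [hsplit, hD] at h
      omega
    have hdeg2pos : 0 < e2.degree := by omega
    have he20 : e2 ≠ 0 := by
      intro h
      rw [h, map_zero] at hdeg2pos
      omega
    by_cases hfixe : dmap e = e
    · have hm := monomial_fixed_mem (F := F) lam hp hlam0 e he0' hfixe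
      have h1 : (monomial d 1 : MvPolynomial (DVar r s) F)
          = monomial e 1 * monomial e2 1 := by
        rw [monomial_mul, one_mul, hsplit]
      have h2 : (monomial (dmap d) 1 : MvPolynomial (DVar r s) F)
          = monomial e 1 * monomial (dmap e2) 1 := by
        rw [monomial_mul, one_mul]
        congr 1
        rw [← hsplit, dmap_add, hfixe]
      rw [h1, h2]
      exact add_mem (Ideal.mul_mem_right _ _ hm) (Ideal.mul_mem_right _ _ hm)
    · have hu : (monomial e 1 + monomial (dmap e) 1 : MvPolynomial (DVar r s) F)
          ∈ Ideal.span (Jset F r s p lam) :=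
        Ideal.subset_span (pair_gen_mem lam hlam0 e he0' hep hchie)
      by_cases hfixe2 : dmap e2 = e2
      · have hdd : dmap d = dmap e + e2 := by
          rw [← hsplit, dmap_add, hfixe2]
        have heq : (monomial d 1 + monomial (dmap d) 1 : MvPolynomial (DVar r s) F)
            = (monomial e 1 + monomial (dmap e) 1) * monomial e2 1 := by
          rw [add_mul, monomial_mul, monomial_mul, one_mul, hsplit, hdd]
        rw [heq]
        exact Ideal.mul_mem_right _ _ hu
      · have hv := ih e2.degree (by omega) e2 rfl he20 hchie2
        have h2 : (2 : MvPolynomial (DVar r s) F) = 0 := CharTwo.two_eq_zero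
        have key : (monomial d 1 + monomial (dmap d) 1 : MvPolynomial (DVar r s) F) =
            (monomial e 1 + monomial (dmap e) 1) * monomial e2 1
              + monomial (dmap e) 1 * (monomial e2 1 + monomial (dmap e2) 1) := by
          have hd1 : (monomial d 1 : MvPolynomial (DVar r s) F)
              = monomial e 1 * monomial e2 1 := by
            rw [monomial_mul, one_mul, hsplit]
          have hd2 : (monomial (dmap d) 1 : MvPolynomial (DVar r s) F)
              = monomial (dmap e) 1 * monomial (dmap e2) 1 := by
            rw [monomial_mul, one_mul, ← hsplit, dmap_add]
          rw [hd1, hd2]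
          linear_combination (-((monomial (dmap e) 1 : MvPolynomial (DVar r s) F)
            * monomial e2 1)) * h2
        rw [key]
        exact add_mem (Ideal.mul_mem_right _ _ hu) (Ideal.mul_mem_left _ _ hv)

lemma invariant_mem [CharP F 2] (hp : 3 ≤ p) (hlam0 : ∀ i, lam i ≠ 0)
    (hwp : ∀ v : DVar r s, rhoCoeff lam v ^ p = 1) :
    ∀ n (f : MvPolynomial (DVar r s) F), f.support.card = n →
      sigmaMap F r s f = f → rhoMap F r s lam f = f → constantCoeff f = 0 →
      f ∈ Ideal.span (Jset F r s p lam) := by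
  intro n
  induction n using Nat.strong_induction_on with
  | _ n ih =>
    intro f hcard hsig hrho h0
    classical
    rcases eq_or_ne f 0 with rfl | hf0
    · exact zero_mem _
    obtain ⟨d, hd⟩ := (support_nonempty (p := f)).mpr hf0
    have hc : coeff d f ≠ 0 := mem_support_iff.mp hd
    set c := coeff d f with hcdef
    have hd0 : d ≠ 0 := by
      intro h
      apply hc
      rw [hcdef, h, ← constantCoeff_eq]
      exact h0
    have hchi : chi lam d = 1 := by
      have h1 : chi lam d * c = 1 * c := by
        rw [one_mul, hcdef, ← coeff_rho lam f d, hrho]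
      exact mul_right_cancel₀ hc h1
    have hcs : coeff (dmap d) f = c := by
      conv_lhs => rw [← hsig]
      exact coeff_sigma f d
    by_cases hfix : dmap d = d
    · set g := f - monomial d c with hgdef
      have hgs : sigmaMap F r s g = g := by
        rw [hgdef, map_sub, hsig, sigma_monomial, hfix]
      have hgr : rhoMap F r s lam g = g := by
        rw [hgdef, map_sub, hrho, rho_monomial, hchi, one_mul]
      have hg0 : constantCoeff g = 0 := by
        rw [hgdef, map_sub, h0, constantCoeff_monomial, if_neg hd0, sub_zero]
      have hsupp : g.support ⊆ f.support.erase d := by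
        intro u hu
        have hgu : coeff u g ≠ 0 := mem_support_iff.mp hu
        rw [Finset.mem_erase]
        constructor
        · intro h
          subst h
          rw [hgdef, coeff_sub, coeff_monomial, if_pos rfl, sub_self] at hgu
          exact hgu rfl
        · rw [mem_support_iff]
          intro h
          apply hgu
          rw [hgdef, coeff_sub, h, coeff_monomial, zero_sub, neg_eq_zero]
          split_ifs with h2
          · subst h2; exact absurd h hc
          · rfl
      have hlt : g.support.card < n := by
        rw [← hcard]
        exact lt_of_le_of_lt (Finset.card_le_card hsupp) (Finset.card_erase_lt_of_mem hd)
      have hg := ih _ hlt g rfl hgs hgr hg0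
      have hrest : (monomial d c : MvPolynomial (DVar r s) F)
          ∈ Ideal.span (Jset F r s p lam) := by
        have : (monomial d c : MvPolynomial (DVar r s) F) = C c * monomial d 1 := by
          rw [C_mul_monomial, mul_one]
        rw [this]
        exact Ideal.mul_mem_left _ _ (monomial_fixed_mem lam hp hlam0 d hd0 hfix)
      have : f = g + monomial d c := by rw [hgdef, sub_add_cancel]
      rw [this]
      exact add_mem hg hrest
    · set q : MvPolynomial (DVar r s) F := monomial d c + monomial (dmap d) c with hqdef
      have hdd0 : dmap d ≠ 0 := by
        intro h
        apply hd0
        rw [← dmap_dmap d, h]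
        ext v
        rw [dmap_apply]
        rfl
      have hqs : sigmaMap F r s q = q := by
        rw [hqdef, map_add, sigma_monomial, sigma_monomial, dmap_dmap, add_comm]
      have hqr : rhoMap F r s lam q = q := by
        rw [hqdef, map_add, rho_monomial, rho_monomial, hchi, chi_dmap lam hlam0 hchi, one_mul]
      have hq0 : constantCoeff q = 0 := by
        rw [hqdef, map_add, constantCoeff_monomial, constantCoeff_monomial,
          if_neg hd0, if_neg hdd0, add_zero]
      set g := f - q with hgdef
      have hgs : sigmaMap F r s g = g := by rw [hgdef, map_sub, hsig, hqs]
      have hgr : rhoMap F r s lam g = g := by rw [hgdef, map_sub, hrho, hqr]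
      have hg0 : constantCoeff g = 0 := by rw [hgdef, map_sub, h0, hq0, sub_zero]
      have hsupp : g.support ⊆ f.support.erase d := by
        intro u hu
        have hgu : coeff u g ≠ 0 := mem_support_iff.mp hu
        rw [Finset.mem_erase]
        constructor
        · intro h
          subst h
          rw [hgdef, coeff_sub, hqdef, coeff_add, coeff_monomial, coeff_monomial,
            if_pos rfl, if_neg hfix, add_zero, sub_self] at hgu
          exact hgu rfl
        · rw [mem_support_iff]
          intro h
          apply hgu
          have hud : u ≠ d := by intro hh; subst hh; exact hc h
          have hudd : u ≠ dmap d := by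
            intro hh; subst hh; rw [hcs] at h; exact hc h
          rw [hgdef, coeff_sub, h, hqdef, coeff_add, coeff_monomial, coeff_monomial,
            if_neg (fun hh => hud hh.symm), if_neg (fun hh => hudd hh.symm), add_zero,
            sub_zero]
      have hlt : g.support.card < n := by
        rw [← hcard]
        exact lt_of_le_of_lt (Finset.card_le_card hsupp) (Finset.card_erase_lt_of_mem hd)
      have hg := ih _ hlt g rfl hgs hgr hg0
      have hrest : q ∈ Ideal.span (Jset F r s p lam) := by
        have hqc : q = C c * (monomial d 1 + monomial (dmap d) 1) := by
          rw [mul_add, C_mul_monomial, C_mul_monomial, mul_one, hqdef]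
        rw [hqc]
        exact Ideal.mul_mem_left _ _ (pair_mem lam hp hlam0 hwp d.degree d rfl hd0 hchi)
      have : f = g + q := by rw [hgdef, sub_add_cancel]
      rw [this]
      exact add_mem hg hrest

end HilbAux

/-- For `p ≥ 3` an odd integer, the Hilbert ideal `I_H` equals the ideal
generated by the homogeneous `G`-invariant polynomials `f` with `0 < deg f ≤ p`. -/
theorem hilbertIdeal_generated_in_degrees_le_p
    {F : Type*} [Field F] [CharP F 2] {r s p : ℕ} (hp : 3 ≤ p) (hodd : Odd p)
    (ζ : F) (hζ : IsPrimitiveRoot ζ p)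
    (lam : Fin r → F) (hlam : ∀ i, lam i ^ p = 1 ∧ lam i ≠ 1) :
    HilbertIdeal F r s lam =
      Ideal.span {f : MvPolynomial (DVar r s) F |
        sigmaMap F r s f = f ∧ rhoMap F r s lam f = f ∧
        ∃ d : ℕ, 0 < d ∧ d ≤ p ∧ f.IsHomogeneous d} := by
  have hp0 : p ≠ 0 := by omega
  have hlam0 : ∀ i, lam i ≠ 0 := by
    intro i h
    have h1 := (hlam i).1
    rw [h, zero_pow hp0] at h1
    exact zero_ne_one h1
  have hwp : ∀ v : DVar r s, rhoCoeff lam v ^ p = 1 := by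
    intro v
    rcases v with (i | i) | j
    · exact (hlam i).1
    · show (lam i)⁻¹ ^ p = 1
      rw [inv_pow, (hlam i).1, inv_one]
    · exact one_pow p
  show HilbertIdeal F r s lam = Ideal.span (HilbAux.Jset F r s p lam)
  apply le_antisymm
  · apply Ideal.span_le.mpr
    intro f hf
    exact HilbAux.invariant_mem lam hp hlam0 hwp f.support.card f rfl hf.1 hf.2.1 hf.2.2
  · apply Ideal.span_le.mpr
    intro f hf
    obtain ⟨h1, h2, dd, hdd0, hddp, hh⟩ := hf
    refine Ideal.subset_span ⟨h1, h2, ?_⟩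
    rw [constantCoeff_eq]
    exact hh.coeff_eq_zero (by rw [map_zero]; omega)
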